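/- arXiv:2305.17572 — 2 statements merged into one kernel-verified Lean document; each statement's English description precedes it below -/
import Mathlib

section
/- Product rule for the α-derivative: Let f, g be regulated on (a,b) and α strictly increasing on (a,b). If (D_α f)(x) and (D_α g)(x) exist at x ∈ (a,b), then (D_α (fg))(x) exists and equals g^-(x)(D_α f)(x) + f^+(x)(D_α g)(x), and also equals g^+(x)(D_α f)(x) + f^-(x)(D_α g)(x). -/
open Filter Topology Function Set MeasureTheory

/-- `x` lies in the interval `(a, b)` with extended-real endpoints. -/
def MemI (a b : EReal) (x : ℝ) : Prop := a < (x : EReal) ∧ (x : EReal) < b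

/-- `f` is regulated on `(a, b)`: both one-sided limits exist (as real numbers)
at every point of `(a, b)`. -/
def RegulatedOn' (f : ℝ → ℝ) (a b : EReal) : Prop :=
  ∀ x : ℝ, MemI a b x →
    (∃ L : ℝ, Tendsto f (𝓝[<] x) (𝓝 L)) ∧ ∃ R : ℝ, Tendsto f (𝓝[>] x) (𝓝 R)

/-- The symmetric `α`-derivative of `f` at `x` equals `A`:
`(D_α f)(x) = lim_{h↓0} (f⁻(x+h) - f⁺(x-h)) / (α⁻(x+h) - α⁺(x-h))`. -/
def HasDerivAlpha (f α : ℝ → ℝ) (x A : ℝ) : Prop :=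
  Tendsto (fun h : ℝ =>
      (leftLim f (x + h) - rightLim f (x - h)) /
        (leftLim α (x + h) - rightLim α (x - h)))
    (𝓝[>] (0 : ℝ)) (𝓝 A)

/-- The filter of real numbers approaching `b : EReal` from the left (`x ↑ b`). -/
noncomputable def leftFilter (b : EReal) : Filter ℝ := comap (fun x : ℝ => (x : EReal)) (𝓝[<] b)

/-- The filter of real numbers approaching `a : EReal` from the right (`x ↓ a`). -/
noncomputable def rightFilter (a : EReal) : Filter ℝ := comap (fun x : ℝ => (x : EReal)) (𝓝[>] a)


lemma aux_left (f : ℝ → ℝ) (x R δ₀ : ℝ) (hδ₀ : 0 < δ₀)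
    (hreg : ∀ y : ℝ, x < y → y < x + δ₀ → ∃ L : ℝ, Tendsto f (𝓝[<] y) (𝓝 L))
    (hR : Tendsto f (𝓝[>] x) (𝓝 R)) :
    Tendsto (fun h : ℝ => leftLim f (x + h)) (𝓝[>] (0:ℝ)) (𝓝 R) := by
  rw [Metric.tendsto_nhds]
  intro ε hε
  have h2 : {t : ℝ | dist (f t) R < ε/2} ∈ 𝓝[>] x :=
    (Metric.tendsto_nhds.mp hR (ε/2) (by positivity))
  obtain ⟨u, hu, hsub⟩ := mem_nhdsGT_iff_exists_Ioo_subset.mp h2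
  have hη : 0 < min (u - x) δ₀ := lt_min (by simpa using hu) hδ₀
  filter_upwards [Ioo_mem_nhdsGT hη] with h hh
  have hx1 : x < x + h := by linarith [hh.1]
  have hx2 : x + h < x + δ₀ := by have := hh.2.trans_le (min_le_right _ _); linarith
  have hxu : x + h < u := by have := hh.2.trans_le (min_le_left _ _); linarith
  obtain ⟨L, hL⟩ := hreg (x + h) hx1 hx2
  rw [leftLim_eq_of_tendsto hL]
  have hev : ∀ᶠ t in 𝓝[<] (x + h), dist (f t) R ≤ ε/2 := by
    filter_upwards [Ioo_mem_nhdsLT hx1] with t ht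
    exact (hsub ⟨ht.1, ht.2.trans hxu⟩).le
  have : dist L R ≤ ε/2 :=
    le_of_tendsto (hL.dist tendsto_const_nhds) hev
  linarith

lemma aux_right (f : ℝ → ℝ) (x L δ₀ : ℝ) (hδ₀ : 0 < δ₀)
    (hreg : ∀ y : ℝ, x - δ₀ < y → y < x → ∃ R : ℝ, Tendsto f (𝓝[>] y) (𝓝 R))
    (hL : Tendsto f (𝓝[<] x) (𝓝 L)) :
    Tendsto (fun h : ℝ => rightLim f (x - h)) (𝓝[>] (0:ℝ)) (𝓝 L) := by
  rw [Metric.tendsto_nhds]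
  intro ε hε
  have h2 : {t : ℝ | dist (f t) L < ε/2} ∈ 𝓝[<] x :=
    (Metric.tendsto_nhds.mp hL (ε/2) (by positivity))
  obtain ⟨u, hu, hsub⟩ := mem_nhdsLT_iff_exists_Ioo_subset.mp h2
  have hη : 0 < min (x - u) δ₀ := lt_min (by simpa using hu) hδ₀
  filter_upwards [Ioo_mem_nhdsGT hη] with h hh
  have hx1 : x - h < x := by linarith [hh.1]
  have hx2 : x - δ₀ < x - h := by have := hh.2.trans_le (min_le_right _ _); linarith
  have hxu : u < x - h := by have := hh.2.trans_le (min_le_left _ _); linarith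
  obtain ⟨R, hR⟩ := hreg (x - h) hx2 hx1
  rw [rightLim_eq_of_tendsto hR]
  have hev : ∀ᶠ t in 𝓝[>] (x - h), dist (f t) L ≤ ε/2 := by
    filter_upwards [Ioo_mem_nhdsGT hx1] with t ht
    exact (hsub ⟨hxu.trans ht.1, ht.2⟩).le
  have : dist R L ≤ ε/2 :=
    le_of_tendsto (hR.dist tendsto_const_nhds) hev
  linarith

lemma aux_lt_top (x : ℝ) (b : EReal) (hxb : (x:EReal) < b) :
    ∃ δ : ℝ, 0 < δ ∧ ∀ y : ℝ, y < x + δ → (y:EReal) < b := by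
  induction b with
  | bot => exact absurd hxb (by simp)
  | coe b' =>
      have : x < b' := by exact_mod_cast hxb
      exact ⟨b' - x, by linarith, fun y hy => by
        have : y < b' := by linarith
        exact_mod_cast this⟩
  | top => exact ⟨1, one_pos, fun y _ => by simp [EReal.coe_lt_top]⟩

lemma aux_gt_bot (x : ℝ) (a : EReal) (hxa : a < (x:EReal)) :
    ∃ δ : ℝ, 0 < δ ∧ ∀ y : ℝ, x - δ < y → a < (y:EReal) := by
  induction a with
  | top => exact absurd hxa (by simp)
  | coe a' =>
      have : a' < x := by exact_mod_cast hxa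
      exact ⟨x - a', by linarith, fun y hy => by
        have : a' < y := by linarith
        exact_mod_cast this⟩
  | bot => exact ⟨1, one_pos, fun y _ => by simp [EReal.bot_lt_coe]⟩
/-- Product rule for the symmetric `α`-derivative. -/
theorem stmt7 (a b : EReal) (hab : a < b) (f g α : ℝ → ℝ)
    (hf : RegulatedOn' f a b) (hg : RegulatedOn' g a b)
    (hα : StrictMonoOn α {x : ℝ | MemI a b x})
    (x Df Dg : ℝ) (hx : MemI a b x)
    (hDf : HasDerivAlpha f α x Df) (hDg : HasDerivAlpha g α x Dg) :
    HasDerivAlpha (fun t => f t * g t) α x (leftLim g x * Df + rightLim f x * Dg) ∧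
    HasDerivAlpha (fun t => f t * g t) α x (rightLim g x * Df + leftLim f x * Dg) := by
  obtain ⟨δ₁, hδ₁, hb⟩ := aux_lt_top x b hx.2
  obtain ⟨δ₂, hδ₂, ha⟩ := aux_gt_bot x a hx.1
  set δ₀ := min δ₁ δ₂ with hδ₀def
  have hδ₀ : 0 < δ₀ := lt_min hδ₁ hδ₂
  have memI : ∀ y : ℝ, x - δ₀ < y → y < x + δ₀ → MemI a b y := fun y h1 h2 =>
    ⟨ha y (by have := min_le_right δ₁ δ₂; linarith),
     hb y (by have := min_le_left δ₁ δ₂; linarith)⟩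
  -- one-sided limits at x
  obtain ⟨⟨Lf, hLf⟩, ⟨Rf, hRf⟩⟩ := hf x hx
  obtain ⟨⟨Lg, hLg⟩, ⟨Rg, hRg⟩⟩ := hg x hx
  have hLfe : leftLim f x = Lf := leftLim_eq_of_tendsto hLf
  have hRfe : rightLim f x = Rf := rightLim_eq_of_tendsto hRf
  have hLge : leftLim g x = Lg := leftLim_eq_of_tendsto hLg
  have hRge : rightLim g x = Rg := rightLim_eq_of_tendsto hRg
  -- limits of shifted one-sided limits
  have regL : ∀ (F : ℝ → ℝ), RegulatedOn' F a b →
      ∀ y : ℝ, x < y → y < x + δ₀ → ∃ L : ℝ, Tendsto F (𝓝[<] y) (𝓝 L) :=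
    fun F hF y h1 h2 => (hF y (memI y (by linarith) h2)).1
  have regR : ∀ (F : ℝ → ℝ), RegulatedOn' F a b →
      ∀ y : ℝ, x - δ₀ < y → y < x → ∃ R : ℝ, Tendsto F (𝓝[>] y) (𝓝 R) :=
    fun F hF y h1 h2 => (hF y (memI y h1 (by linarith))).2
  have hfL : Tendsto (fun h : ℝ => leftLim f (x + h)) (𝓝[>] (0:ℝ)) (𝓝 Rf) :=
    aux_left f x Rf δ₀ hδ₀ (regL f hf) hRf
  have hgL : Tendsto (fun h : ℝ => leftLim g (x + h)) (𝓝[>] (0:ℝ)) (𝓝 Rg) :=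
    aux_left g x Rg δ₀ hδ₀ (regL g hg) hRg
  have hfR : Tendsto (fun h : ℝ => rightLim f (x - h)) (𝓝[>] (0:ℝ)) (𝓝 Lf) :=
    aux_right f x Lf δ₀ hδ₀ (regR f hf) hLf
  have hgR : Tendsto (fun h : ℝ => rightLim g (x - h)) (𝓝[>] (0:ℝ)) (𝓝 Lg) :=
    aux_right g x Lg δ₀ hδ₀ (regR g hg) hLg
  -- eventual product decomposition
  have hev : ∀ᶠ h in 𝓝[>] (0:ℝ),
      leftLim (fun t => f t * g t) (x + h) = leftLim f (x + h) * leftLim g (x + h) ∧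
      rightLim (fun t => f t * g t) (x - h) = rightLim f (x - h) * rightLim g (x - h) := by
    filter_upwards [Ioo_mem_nhdsGT hδ₀] with h hh
    have h1 : x - δ₀ < x + h := by linarith [hh.1, hh.2]
    have h2 : x + h < x + δ₀ := by linarith [hh.2]
    have h3 : x - δ₀ < x - h := by linarith [hh.2]
    have h4 : x - h < x + δ₀ := by linarith [hh.1]
    obtain ⟨⟨Lf', hLf'⟩, -⟩ := hf (x + h) (memI _ h1 h2)
    obtain ⟨⟨Lg', hLg'⟩, -⟩ := hg (x + h) (memI _ h1 h2)
    obtain ⟨-, ⟨Rf', hRf'⟩⟩ := hf (x - h) (memI _ h3 h4)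
    obtain ⟨-, ⟨Rg', hRg'⟩⟩ := hg (x - h) (memI _ h3 h4)
    constructor
    · rw [leftLim_eq_of_tendsto (hLf'.mul hLg'),
        leftLim_eq_of_tendsto hLf',
        leftLim_eq_of_tendsto hLg']
    · rw [rightLim_eq_of_tendsto (hRf'.mul hRg'),
        rightLim_eq_of_tendsto hRf',
        rightLim_eq_of_tendsto hRg']
  set Δ : ℝ → ℝ := fun h => leftLim α (x + h) - rightLim α (x - h) with hΔ
  constructor
  · have key : Tendsto (fun h : ℝ =>
        leftLim f (x + h) * ((leftLim g (x + h) - rightLim g (x - h)) / Δ h)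
        + rightLim g (x - h) * ((leftLim f (x + h) - rightLim f (x - h)) / Δ h))
        (𝓝[>] (0:ℝ)) (𝓝 (Rf * Dg + Lg * Df)) := (hfL.mul hDg).add (hgR.mul hDf)
    rw [hLge, hRfe, add_comm]
    refine Tendsto.congr' ?_ key
    filter_upwards [hev] with h ⟨e1, e2⟩
    rw [e1, e2, mul_div_assoc', mul_div_assoc', ← add_div]
    ring_nf
    rfl
  · have key : Tendsto (fun h : ℝ =>
        rightLim f (x - h) * ((leftLim g (x + h) - rightLim g (x - h)) / Δ h)
        + leftLim g (x + h) * ((leftLim f (x + h) - rightLim f (x - h)) / Δ h))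
        (𝓝[>] (0:ℝ)) (𝓝 (Lf * Dg + Rg * Df)) := (hfR.mul hDg).add (hgL.mul hDf)
    rw [hLfe, hRge, add_comm]
    refine Tendsto.congr' ?_ key
    filter_upwards [hev] with h ⟨e1, e2⟩
    rw [e1, e2, mul_div_assoc', mul_div_assoc', ← add_div]
    ring_nf
    rfl
end

section
/- Let f be regulated on (a,b), α strictly increasing on (a,b), and suppose (D_α f)(x) exists for all x ∈ (a,b). If (D_α f)(x) > 0 for all x ∈ (a,b), then f^+(x) < f^-(y) for all a < x < y < b. -/
open Filter Topology Function Set MeasureTheory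

private lemma memI_between {a b : EReal} {x y s : ℝ} (hx : MemI a b x) (hy : MemI a b y)
    (h1 : x ≤ s) (h2 : s ≤ y) : MemI a b s :=
  ⟨lt_of_lt_of_le hx.1 (EReal.coe_le_coe_iff.2 h1),
   lt_of_le_of_lt (EReal.coe_le_coe_iff.2 h2) hy.2⟩

private lemma memI_open {a b : EReal} {z : ℝ} (hz : MemI a b z) :
    ∃ p q : ℝ, p < z ∧ z < q ∧ ∀ s : ℝ, p < s → s < q → MemI a b s := by
  obtain ⟨c, hc1, hc2⟩ := exists_between hz.1
  obtain ⟨d, hd1, hd2⟩ := exists_between hz.2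
  have hcbot : c ≠ ⊥ := by rintro rfl; exact not_lt_bot hc1
  have hctop : c ≠ ⊤ := (hc2.trans (EReal.coe_lt_top z)).ne
  have hdbot : d ≠ ⊥ := by rintro rfl; exact not_lt_bot hd1
  have hdtop : d ≠ ⊤ := by rintro rfl; exact not_top_lt hd2
  have hpc : (c.toReal : EReal) = c := EReal.coe_toReal hctop hcbot
  have hqd : (d.toReal : EReal) = d := EReal.coe_toReal hdtop hdbot
  refine ⟨c.toReal, d.toReal, ?_, ?_, ?_⟩
  · exact EReal.coe_lt_coe_iff.1 (by rw [hpc]; exact hc2)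
  · exact EReal.coe_lt_coe_iff.1 (by rw [hqd]; exact hd1)
  · intro s hs1 hs2
    constructor
    · calc a < c := hc1
        _ = (c.toReal : EReal) := hpc.symm
        _ < (s : EReal) := EReal.coe_lt_coe_iff.2 hs1
    · calc (s : EReal) < (d.toReal : EReal) := EReal.coe_lt_coe_iff.2 hs2
        _ = d := hqd
        _ < b := hd2

private lemma dist_left {s c : ℝ} (h : s < c) : dist s c = c - s := by
  rw [Real.dist_eq, abs_of_nonpos (by linarith)]; ring

private lemma dist_right {s c : ℝ} (h : c < s) : dist s c = s - c := by
  rw [Real.dist_eq, abs_of_nonneg (by linarith)]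

/-- If `f → L` from the left at `c`, and near `c` (on the left) `g t` is a one-sided limit
of `f` at `t`, then `g → L` from the left at `c`. -/
private lemma tendsto_lims_left (f g : ℝ → ℝ) {c L : ℝ} (hL : Tendsto f (𝓝[<] c) (𝓝 L))
    (hg : ∀ᶠ t in 𝓝[<] c,
      Tendsto f (𝓝[>] t) (𝓝 (g t)) ∨ Tendsto f (𝓝[<] t) (𝓝 (g t))) :
    Tendsto g (𝓝[<] c) (𝓝 L) := by
  rw [Metric.tendsto_nhdsWithin_nhds] at hL ⊢
  intro ε hε
  obtain ⟨δ, hδ, hδf⟩ := hL (ε / 2) (by linarith)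
  obtain ⟨l, hl, hsub⟩ := mem_nhdsLT_iff_exists_Ioo_subset.1 hg
  have hl' : l < c := hl
  refine ⟨min δ (c - l), lt_min hδ (by linarith), ?_⟩
  intro t ht htd
  have htc : t < c := ht
  rw [dist_left htc] at htd
  have h1 : c - t < δ := lt_of_lt_of_le htd (min_le_left _ _)
  have h2 : l < t := by
    have := lt_of_lt_of_le htd (min_le_right _ _); linarith
  have hPt := hsub ⟨h2, htc⟩
  have key : dist (g t) L ≤ ε / 2 := by
    rcases hPt with hT | hT
    · have hmem : Ioo t c ∈ 𝓝[>] t := Ioo_mem_nhdsGT htc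
      have hb : ∀ᶠ s in 𝓝[>] t, dist (f s) L ≤ ε / 2 := by
        filter_upwards [hmem] with s hs
        exact (hδf (show s ∈ Iio c from hs.2) (by rw [dist_left hs.2]; linarith [hs.1])).le
      exact le_of_tendsto (hT.dist (tendsto_const_nhds : Tendsto (fun _ => L) _ _)) hb
    · have hlt : max l (c - δ) < t := max_lt h2 (by linarith)
      have hmem : Ioo (max l (c - δ)) t ∈ 𝓝[<] t := Ioo_mem_nhdsLT hlt
      have hb : ∀ᶠ s in 𝓝[<] t, dist (f s) L ≤ ε / 2 := by
        filter_upwards [hmem] with s hs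
        have hsc : s < c := lt_trans hs.2 htc
        have : c - δ < s := lt_of_le_of_lt (le_max_right _ _) hs.1
        exact (hδf (show s ∈ Iio c from hsc) (by rw [dist_left hsc]; linarith)).le
      exact le_of_tendsto (hT.dist (tendsto_const_nhds : Tendsto (fun _ => L) _ _)) hb
  linarith

/-- Right-hand version of `tendsto_lims_left`. -/
private lemma tendsto_lims_right (f g : ℝ → ℝ) {c L : ℝ} (hL : Tendsto f (𝓝[>] c) (𝓝 L))
    (hg : ∀ᶠ t in 𝓝[>] c,
      Tendsto f (𝓝[>] t) (𝓝 (g t)) ∨ Tendsto f (𝓝[<] t) (𝓝 (g t))) :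
    Tendsto g (𝓝[>] c) (𝓝 L) := by
  rw [Metric.tendsto_nhdsWithin_nhds] at hL ⊢
  intro ε hε
  obtain ⟨δ, hδ, hδf⟩ := hL (ε / 2) (by linarith)
  obtain ⟨r, hr, hsub⟩ := mem_nhdsGT_iff_exists_Ioo_subset.1 hg
  have hr' : c < r := hr
  refine ⟨min δ (r - c), lt_min hδ (by linarith), ?_⟩
  intro t ht htd
  have htc : c < t := ht
  rw [dist_right htc] at htd
  have h1 : t - c < δ := lt_of_lt_of_le htd (min_le_left _ _)
  have h2 : t < r := by
    have := lt_of_lt_of_le htd (min_le_right _ _); linarith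
  have hPt := hsub ⟨htc, h2⟩
  have key : dist (g t) L ≤ ε / 2 := by
    rcases hPt with hT | hT
    · have hlt : t < min r (c + δ) := lt_min h2 (by linarith)
      have hmem : Ioo t (min r (c + δ)) ∈ 𝓝[>] t := Ioo_mem_nhdsGT hlt
      have hb : ∀ᶠ s in 𝓝[>] t, dist (f s) L ≤ ε / 2 := by
        filter_upwards [hmem] with s hs
        have hcs : c < s := lt_trans htc hs.1
        have : s < c + δ := lt_of_lt_of_le hs.2 (min_le_right _ _)
        exact (hδf (show s ∈ Ioi c from hcs) (by rw [dist_right hcs]; linarith)).le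
      exact le_of_tendsto (hT.dist (tendsto_const_nhds : Tendsto (fun _ => L) _ _)) hb
    · have hmem : Ioo c t ∈ 𝓝[<] t := Ioo_mem_nhdsLT htc
      have hb : ∀ᶠ s in 𝓝[<] t, dist (f s) L ≤ ε / 2 := by
        filter_upwards [hmem] with s hs
        exact (hδf (show s ∈ Ioi c from hs.1) (by rw [dist_right hs.1]; linarith [hs.2])).le
      exact le_of_tendsto (hT.dist (tendsto_const_nhds : Tendsto (fun _ => L) _ _)) hb
  linarith

private lemma regLeft {a b : EReal} {f : ℝ → ℝ} (hf : RegulatedOn' f a b) {t : ℝ}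
    (ht : MemI a b t) : Tendsto f (𝓝[<] t) (𝓝 (leftLim f t)) := by
  obtain ⟨L, hL⟩ := (hf t ht).1
  have hne : 𝓝[<] t ≠ ⊥ := Filter.NeBot.ne inferInstance
  rw [leftLim_eq_of_tendsto hL]; exact hL

private lemma regRight {a b : EReal} {f : ℝ → ℝ} (hf : RegulatedOn' f a b) {t : ℝ}
    (ht : MemI a b t) : Tendsto f (𝓝[>] t) (𝓝 (rightLim f t)) := by
  obtain ⟨R, hR⟩ := (hf t ht).2
  have hne : 𝓝[>] t ≠ ⊥ := Filter.NeBot.ne inferInstance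
  rw [rightLim_eq_of_tendsto hR]; exact hR

private lemma evLeft {a b : EReal} {f : ℝ → ℝ} (hf : RegulatedOn' f a b) {c : ℝ}
    (hc : MemI a b c) :
    ∀ᶠ t in 𝓝[<] c, Tendsto f (𝓝[>] t) (𝓝 (rightLim f t)) ∧
      Tendsto f (𝓝[<] t) (𝓝 (leftLim f t)) := by
  obtain ⟨p, q, hp, hq, hmem⟩ := memI_open hc
  filter_upwards [Ioo_mem_nhdsLT hp] with t ht
  exact ⟨regRight hf (hmem t ht.1 (ht.2.trans hq)), regLeft hf (hmem t ht.1 (ht.2.trans hq))⟩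

private lemma evRight {a b : EReal} {f : ℝ → ℝ} (hf : RegulatedOn' f a b) {c : ℝ}
    (hc : MemI a b c) :
    ∀ᶠ t in 𝓝[>] c, Tendsto f (𝓝[>] t) (𝓝 (rightLim f t)) ∧
      Tendsto f (𝓝[<] t) (𝓝 (leftLim f t)) := by
  obtain ⟨p, q, hp, hq, hmem⟩ := memI_open hc
  filter_upwards [Ioo_mem_nhdsGT hq] with t ht
  exact ⟨regRight hf (hmem t (hp.trans ht.1) ht.2), regLeft hf (hmem t (hp.trans ht.1) ht.2)⟩

private lemma leftLim_tendsto_left {a b : EReal} {f : ℝ → ℝ} (hf : RegulatedOn' f a b) {c : ℝ}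
    (hc : MemI a b c) : Tendsto (leftLim f) (𝓝[<] c) (𝓝 (leftLim f c)) :=
  tendsto_lims_left f _ (regLeft hf hc) ((evLeft hf hc).mono fun _ h => Or.inr h.2)

private lemma rightLim_tendsto_left {a b : EReal} {f : ℝ → ℝ} (hf : RegulatedOn' f a b) {c : ℝ}
    (hc : MemI a b c) : Tendsto (rightLim f) (𝓝[<] c) (𝓝 (leftLim f c)) :=
  tendsto_lims_left f _ (regLeft hf hc) ((evLeft hf hc).mono fun _ h => Or.inl h.1)

private lemma leftLim_tendsto_right {a b : EReal} {f : ℝ → ℝ} (hf : RegulatedOn' f a b) {c : ℝ}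
    (hc : MemI a b c) : Tendsto (leftLim f) (𝓝[>] c) (𝓝 (rightLim f c)) :=
  tendsto_lims_right f _ (regRight hf hc) ((evRight hf hc).mono fun _ h => Or.inr h.2)

private lemma rightLim_tendsto_right {a b : EReal} {f : ℝ → ℝ} (hf : RegulatedOn' f a b) {c : ℝ}
    (hc : MemI a b c) : Tendsto (rightLim f) (𝓝[>] c) (𝓝 (rightLim f c)) :=
  tendsto_lims_right f _ (regRight hf hc) ((evRight hf hc).mono fun _ h => Or.inl h.1)

/-- The local increase lemma coming from positivity of the symmetric `α`-derivative. -/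
private lemma local_incr {a b : EReal} {f A D : ℝ → ℝ}
    (hα : StrictMonoOn A {x : ℝ | MemI a b x})
    (hD : ∀ x : ℝ, MemI a b x → HasDerivAlpha f A x (D x))
    (hpos : ∀ x : ℝ, MemI a b x → 0 < D x) {z : ℝ} (hz : MemI a b z) :
    ∃ δ : ℝ, 0 < δ ∧ ∀ h : ℝ, 0 < h → h < δ →
      MemI a b (z - h) ∧ MemI a b (z + h) ∧ rightLim f (z - h) < leftLim f (z + h) := by
  obtain ⟨p, q, hp, hq, hmem⟩ := memI_open hz
  have hsubset : Ioo p q ⊆ {x : ℝ | MemI a b x} := fun s hs => hmem s hs.1 hs.2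
  have hmono : MonotoneOn A (Ioo p q) := (hα.monotoneOn).mono hsubset
  have hQ : ∀ᶠ w in 𝓝[>] (0 : ℝ),
      0 < (leftLim f (z + w) - rightLim f (z - w)) /
        (leftLim A (z + w) - rightLim A (z - w)) :=
    (hD z hz).eventually (eventually_gt_nhds (hpos z hz))
  obtain ⟨u1, hu1, hsub1⟩ := mem_nhdsGT_iff_exists_Ioo_subset.1 hQ
  have hu1' : (0 : ℝ) < u1 := hu1
  refine ⟨min u1 (min (z - p) (q - z)), lt_min hu1' (lt_min (by linarith) (by linarith)), ?_⟩
  intro h h0 hhδ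
  have hh1 : h < u1 := lt_of_lt_of_le hhδ (min_le_left _ _)
  have hh2 : h < z - p := lt_of_lt_of_le hhδ ((min_le_right _ _).trans (min_le_left _ _))
  have hh3 : h < q - z := lt_of_lt_of_le hhδ ((min_le_right _ _).trans (min_le_right _ _))
  have hmzh : MemI a b (z - h) := hmem _ (by linarith) (by linarith)
  have hpzh : MemI a b (z + h) := hmem _ (by linarith) (by linarith)
  refine ⟨hmzh, hpzh, ?_⟩
  -- one-sided limits of A
  have huq : z - h < q := by linarith
  have hne1 : (Ioo (z - h) q).Nonempty := ⟨z, by constructor <;> linarith⟩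
  have hm1 : MonotoneOn A (Ioo (z - h) q) := hmono.mono (Ioo_subset_Ioo (by linarith) le_rfl)
  have hbdd1 : BddBelow (A '' Ioo (z - h) q) := by
    refine ⟨A (z - h), ?_⟩
    rintro w ⟨s, hs, rfl⟩
    exact hmono ⟨by linarith, by linarith⟩ ⟨by linarith [hs.1], hs.2⟩ hs.1.le
  have hten1 := MonotoneOn.tendsto_nhdsWithin_Ioo_right hne1 hm1 hbdd1
  have hne1' : 𝓝[>] (z - h) ≠ ⊥ := Filter.NeBot.ne inferInstance
  have hrl1 : rightLim A (z - h) = sInf (A '' Ioo (z - h) q) :=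
    rightLim_eq_of_tendsto hten1
  have h1 : rightLim A (z - h) ≤ A z := by
    rw [hrl1]
    exact csInf_le hbdd1 ⟨z, ⟨by linarith, by linarith⟩, rfl⟩
  have hne2 : (Ioo p (z + h)).Nonempty := ⟨z, by constructor <;> linarith⟩
  have hm2 : MonotoneOn A (Ioo p (z + h)) := hmono.mono (Ioo_subset_Ioo le_rfl (by linarith))
  have hbdd2 : BddAbove (A '' Ioo p (z + h)) := by
    refine ⟨A (z + h), ?_⟩
    rintro w ⟨s, hs, rfl⟩
    exact hmono ⟨hs.1, by linarith [hs.2]⟩ ⟨by linarith, by linarith⟩ hs.2.le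
  have hten2 := MonotoneOn.tendsto_nhdsWithin_Ioo_left hne2 hm2 hbdd2
  have hne2' : 𝓝[<] (z + h) ≠ ⊥ := Filter.NeBot.ne inferInstance
  have hll2 : leftLim A (z + h) = sSup (A '' Ioo p (z + h)) :=
    leftLim_eq_of_tendsto hten2
  have h2 : A (z + h / 2) ≤ leftLim A (z + h) := by
    rw [hll2]
    exact le_csSup hbdd2 ⟨z + h / 2, ⟨by linarith, by linarith⟩, rfl⟩
  have h3 : A z < A (z + h / 2) :=
    hα (hsubset ⟨by linarith, by linarith⟩) (hsubset ⟨by linarith, by linarith⟩) (by linarith)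
  have hdenom : 0 < leftLim A (z + h) - rightLim A (z - h) := by linarith
  have hQh := hsub1 ⟨h0, hh1⟩
  have hnum : 0 < leftLim f (z + h) - rightLim f (z - h) := by
    have hmul := mul_pos hQh hdenom
    rwa [div_mul_cancel₀ _ (ne_of_gt hdenom)] at hmul
  linarith

private lemma tendsto_sub_left {w : ℝ} :
    Tendsto (fun h : ℝ => w - h) (𝓝[>] (0 : ℝ)) (𝓝[<] w) := by
  rw [tendsto_nhdsWithin_iff]
  constructor
  · have h0 : Tendsto (fun h : ℝ => h) (𝓝[>] (0 : ℝ)) (𝓝 0) :=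
      tendsto_id.mono_left nhdsWithin_le_nhds
    have := (tendsto_const_nhds : Tendsto (fun _ : ℝ => w) (𝓝[>] (0:ℝ)) (𝓝 w)).sub h0
    simpa using this
  · filter_upwards [self_mem_nhdsWithin] with h hh
    exact sub_lt_self w hh

private lemma tendsto_add_right {w : ℝ} :
    Tendsto (fun h : ℝ => w + h) (𝓝[>] (0 : ℝ)) (𝓝[>] w) := by
  rw [tendsto_nhdsWithin_iff]
  constructor
  · have h0 : Tendsto (fun h : ℝ => h) (𝓝[>] (0 : ℝ)) (𝓝 0) :=
      tendsto_id.mono_left nhdsWithin_le_nhds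
    have := (tendsto_const_nhds : Tendsto (fun _ : ℝ => w) (𝓝[>] (0:ℝ)) (𝓝 w)).add h0
    simpa using this
  · filter_upwards [self_mem_nhdsWithin] with h hh
    exact lt_add_of_pos_right w hh

/-- Bridge: the left limit is at most the right limit at every interior point. -/
private lemma bridge {a b : EReal} {f A D : ℝ → ℝ} (hf : RegulatedOn' f a b)
    (hα : StrictMonoOn A {x : ℝ | MemI a b x})
    (hD : ∀ x : ℝ, MemI a b x → HasDerivAlpha f A x (D x))
    (hpos : ∀ x : ℝ, MemI a b x → 0 < D x) {w : ℝ} (hw : MemI a b w) :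
    leftLim f w ≤ rightLim f w := by
  obtain ⟨δ, hδ, hloc⟩ := local_incr hα hD hpos hw
  have t1 : Tendsto (fun h : ℝ => rightLim f (w - h)) (𝓝[>] (0 : ℝ)) (𝓝 (leftLim f w)) :=
    (rightLim_tendsto_left hf hw).comp tendsto_sub_left
  have t2 : Tendsto (fun h : ℝ => leftLim f (w + h)) (𝓝[>] (0 : ℝ)) (𝓝 (rightLim f w)) :=
    (leftLim_tendsto_right hf hw).comp tendsto_add_right
  refine le_of_tendsto_of_tendsto t1 t2 ?_
  filter_upwards [Ioo_mem_nhdsGT hδ] with h hh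
  exact (hloc h hh.1 hh.2).2.2.le

/-- Nonstrict version: `f⁺(x) ≤ f⁻(y)`. -/
private lemma main_le {a b : EReal} {f A D : ℝ → ℝ} (hf : RegulatedOn' f a b)
    (hα : StrictMonoOn A {x : ℝ | MemI a b x})
    (hD : ∀ x : ℝ, MemI a b x → HasDerivAlpha f A x (D x))
    (hpos : ∀ x : ℝ, MemI a b x → 0 < D x) {x y : ℝ} (hx : MemI a b x) (hy : MemI a b y)
    (hxy : x < y) : rightLim f x ≤ leftLim f y := by
  have hmemIcc : ∀ s : ℝ, x ≤ s → s ≤ y → MemI a b s := fun s h1 h2 =>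
    memI_between hx hy h1 h2
  refine le_of_forall_pos_le_add ?_
  intro ε hε
  rw [← sub_le_iff_le_add]
  set M := rightLim f x - ε with hM
  -- seed
  have hseed : ∀ᶠ s in 𝓝[>] x, M < leftLim f s :=
    (leftLim_tendsto_right hf hx).eventually (eventually_gt_nhds (by rw [hM]; linarith))
  obtain ⟨u, hu, hsubu⟩ := mem_nhdsGT_iff_exists_Ioo_subset.1 hseed
  have hu' : x < u := hu
  set t0 : ℝ := min ((x + u) / 2) ((x + y) / 2) with ht0
  have ht0x : x < t0 := lt_min (by linarith) (by linarith)
  have ht0u : t0 < u := lt_of_le_of_lt (min_le_left _ _) (by linarith)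
  have ht0y : t0 < y := lt_of_le_of_lt (min_le_right _ _) (by linarith)
  set S : Set ℝ := {t | t ∈ Icc x y ∧ ∀ s : ℝ, x < s → s ≤ t → M ≤ leftLim f s} with hS
  have ht0S : t0 ∈ S := by
    refine ⟨⟨ht0x.le, ht0y.le⟩, fun s hs1 hs2 => ?_⟩
    exact (hsubu ⟨hs1, lt_of_le_of_lt hs2 ht0u⟩).le
  have hSne : S.Nonempty := ⟨t0, ht0S⟩
  have hSbdd : BddAbove S := ⟨y, fun t ht => ht.1.2⟩
  set c : ℝ := sSup S with hc
  have hct0 : t0 ≤ c := le_csSup hSbdd ht0S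
  have hcy : c ≤ y := csSup_le hSne fun t ht => ht.1.2
  have hcx : x < c := lt_of_lt_of_le ht0x hct0
  have hcmem : MemI a b c := hmemIcc c (by linarith) hcy
  have hcS : ∀ s : ℝ, x < s → s < c → M ≤ leftLim f s := by
    intro s hs1 hs2
    by_cases hex : ∃ t ∈ S, s < t
    · obtain ⟨t, htS, hst⟩ := hex
      exact htS.2 s hs1 hst.le
    · push_neg at hex
      exact absurd (csSup_le hSne hex) (not_le.2 hs2)
  have hclim : M ≤ leftLim f c := by
    refine ge_of_tendsto (leftLim_tendsto_left hf hcmem) ?_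
    filter_upwards [Ioo_mem_nhdsLT hcx] with s hs
    exact hcS s hs.1 hs.2
  have hcS' : ∀ s : ℝ, x < s → s ≤ c → M ≤ leftLim f s := by
    intro s hs1 hs2
    rcases lt_or_eq_of_le hs2 with h | h
    · exact hcS s hs1 h
    · rw [h]; exact hclim
  -- c must equal y
  have hcey : c = y := by
    by_contra hne
    have hcylt : c < y := lt_of_le_of_ne hcy hne
    obtain ⟨δ, hδ, hloc⟩ := local_incr hα hD hpos hcmem
    set δ' : ℝ := min δ (min (c - x) (y - c)) with hδ'
    have hδ'0 : 0 < δ' := lt_min hδ (lt_min (by linarith) (by linarith))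
    have hδ'1 : δ' ≤ δ := min_le_left _ _
    have hδ'2 : δ' ≤ c - x := (min_le_right _ _).trans (min_le_left _ _)
    have hδ'3 : δ' ≤ y - c := (min_le_right _ _).trans (min_le_right _ _)
    have hnew : c + δ' / 2 ∈ S := by
      refine ⟨⟨by linarith, by linarith⟩, fun s hs1 hs2 => ?_⟩
      rcases le_or_gt s c with h | h
      · exact hcS' s hs1 h
      · set k : ℝ := s - c with hk
        have hk0 : 0 < k := by simp only [hk]; linarith
        have hkδ : k < δ := by simp only [hk]; linarith
        obtain ⟨hm1, hm2, hm3⟩ := hloc k hk0 hkδ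
        have hck : x < c - k := by simp only [hk]; linarith
        have hMk : M ≤ leftLim f (c - k) := hcS (c - k) hck (by linarith)
        have hbr : leftLim f (c - k) ≤ rightLim f (c - k) := bridge hf hα hD hpos hm1
        have hs' : c + k = s := by simp only [hk]; ring
        rw [← hs']
        linarith
    have := le_csSup hSbdd hnew
    linarith
  have := hcS' y (by linarith) (le_of_eq hcey.symm)
  linarith

/-- If `D_α f > 0` on `(a,b)`, then `f⁺(x) < f⁻(y)` for all `a < x < y < b`. -/
theorem stmt9 (a b : EReal) (hab : a < b) (f α : ℝ → ℝ) (D : ℝ → ℝ)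
    (hf : RegulatedOn' f a b) (hα : StrictMonoOn α {x : ℝ | MemI a b x})
    (hD : ∀ x : ℝ, MemI a b x → HasDerivAlpha f α x (D x))
    (hpos : ∀ x : ℝ, MemI a b x → 0 < D x) :
    ∀ x y : ℝ, MemI a b x → MemI a b y → x < y → rightLim f x < leftLim f y := by
  intro x y hx hy hxy
  set z : ℝ := (x + y) / 2 with hz
  have hzx : x < z := by simp only [hz]; linarith
  have hzy : z < y := by simp only [hz]; linarith
  have hzmem : MemI a b z := memI_between hx hy hzx.le hzy.le
  obtain ⟨δ, hδ, hloc⟩ := local_incr hα hD hpos hzmem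
  set h : ℝ := min δ (min (z - x) (y - z)) / 2 with hh
  have hh0 : 0 < h := by
    have : 0 < min δ (min (z - x) (y - z)) := lt_min hδ (lt_min (by linarith) (by linarith))
    simp only [hh]; linarith
  have hhδ : h < δ := by
    have h1 : min δ (min (z - x) (y - z)) ≤ δ := min_le_left _ _
    simp only [hh]; linarith
  have hhx : x < z - h := by
    have h1 : min δ (min (z - x) (y - z)) ≤ z - x := (min_le_right _ _).trans (min_le_left _ _)
    simp only [hh]; linarith
  have hhy : z + h < y := by
    have h1 : min δ (min (z - x) (y - z)) ≤ y - z := (min_le_right _ _).trans (min_le_right _ _)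
    simp only [hh]; linarith
  obtain ⟨hm1, hm2, hm3⟩ := hloc h hh0 hhδ
  have s1 : rightLim f x ≤ leftLim f (z - h) := main_le hf hα hD hpos hx hm1 hhx
  have s2 : leftLim f (z - h) ≤ rightLim f (z - h) := bridge hf hα hD hpos hm1
  have s3 : leftLim f (z + h) ≤ rightLim f (z + h) := bridge hf hα hD hpos hm2
  have s4 : rightLim f (z + h) ≤ leftLim f y := main_le hf hα hD hpos hm2 hy hhy
  linarith
end
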